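/- Let Σ_m be a real n×n positive semidefinite matrix, Φ a real ℓ×n matrix with rank(Σ_m^{1/2}·Φᵀ·Φ·Σ_m^{1/2}) = rank(Σ_m), and μ ∈ range(Σ_m). For σ² > 0 define W_m(σ²) := Σ_m·Φᵀ·(σ²·I_ℓ + Φ·Σ_m·Φᵀ)⁻¹. Then lim_{σ²→0⁺} tr((μ·μᵀ)·Φᵀ·W_m(σ²)ᵀ) = ‖μ‖², i.e., the inner product ⟨W_m(σ²)·Φ·μ, μ⟩ tends to ‖μ‖² as σ² → 0⁺. -/

import Mathlib

open Matrix Filter Topology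

/-- The positive semidefinite square root of a positive semidefinite matrix
(the definition of `Matrix.PosSemidef.sqrt` in Mathlib of December 2024, since removed). -/
noncomputable def Matrix.PosSemidef.sqrt {n 𝕜 : Type*} [Fintype n] [DecidableEq n] [RCLike 𝕜]
    [PartialOrder 𝕜]
    {A : Matrix n n 𝕜} (hA : A.PosSemidef) : Matrix n n 𝕜 :=
  (hA.1.eigenvectorUnitary : Matrix n n 𝕜) *
    diagonal (((↑) : ℝ → 𝕜) ∘ (√·) ∘ hA.1.eigenvalues) *
    (star hA.1.eigenvectorUnitary : Matrix n n 𝕜)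

lemma Matrix.PosSemidef.sqrt_mul_self {m : Type*} [Fintype m] [DecidableEq m]
    {A : Matrix m m ℝ} (hA : A.PosSemidef) : hA.sqrt * hA.sqrt = A := by
  conv_rhs => rw [hA.1.spectral_theorem, Unitary.conjStarAlgAut_apply]
  have hU : (star hA.1.eigenvectorUnitary : Matrix m m ℝ) *
      (hA.1.eigenvectorUnitary : Matrix m m ℝ) = 1 := Unitary.coe_star_mul_self _
  simp only [Matrix.PosSemidef.sqrt]
  calc _ = (hA.1.eigenvectorUnitary : Matrix m m ℝ) *
        (diagonal ((RCLike.ofReal : ℝ → ℝ) ∘ (√·) ∘ hA.1.eigenvalues) *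
          ((star hA.1.eigenvectorUnitary : Matrix m m ℝ) * (hA.1.eigenvectorUnitary : Matrix m m ℝ)) *
          diagonal ((RCLike.ofReal : ℝ → ℝ) ∘ (√·) ∘ hA.1.eigenvalues)) *
        (star hA.1.eigenvectorUnitary : Matrix m m ℝ) := by simp only [Matrix.mul_assoc]
    _ = _ := by
      rw [hU, Matrix.mul_one, diagonal_mul_diagonal]
      congr 3
      ext i
      simp [Real.mul_self_sqrt (hA.eigenvalues_nonneg i)]

lemma Matrix.PosSemidef.posSemidef_sqrt {m : Type*} [Fintype m] [DecidableEq m]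
    {A : Matrix m m ℝ} (hA : A.PosSemidef) : hA.sqrt.PosSemidef := by
  have hD : (diagonal ((RCLike.ofReal : ℝ → ℝ) ∘ (√·) ∘ hA.1.eigenvalues)).PosSemidef :=
    posSemidef_diagonal_iff.mpr fun i => by simp [Real.sqrt_nonneg]
  have := hD.mul_mul_conjTranspose_same (hA.1.eigenvectorUnitary : Matrix m m ℝ)
  simpa only [Matrix.PosSemidef.sqrt, Unitary.coe_star, Matrix.star_eq_conjTranspose] using this

variable {k : ℕ}

lemma aux_posDef_shift {M : Matrix (Fin k) (Fin k) ℝ} (hM : M.PosSemidef) {σ : ℝ} (hσ : 0 < σ) :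
    (σ • (1 : Matrix (Fin k) (Fin k) ℝ) + M).PosDef := by
  refine Matrix.PosDef.add_posSemidef (Matrix.PosDef.of_dotProduct_mulVec_pos ?_ ?_) hM
  · simp [Matrix.IsHermitian]
  · intro x hx
    have h1 : (σ • (1 : Matrix (Fin k) (Fin k) ℝ)) *ᵥ x = σ • x := by
      simp [Matrix.smul_mulVec]
    rw [h1, dotProduct_smul]
    exact mul_pos hσ (dotProduct_star_self_pos_iff.mpr hx)

lemma aux_quad_le {M : Matrix (Fin k) (Fin k) ℝ} (hM : M.PosSemidef) {σ : ℝ} (hσ : 0 < σ)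
    (z : Fin k → ℝ) :
    z ⬝ᵥ (σ • (1 : Matrix (Fin k) (Fin k) ℝ) + M)⁻¹ *ᵥ z ≤ σ⁻¹ * (z ⬝ᵥ z) := by
  set P := σ • (1 : Matrix (Fin k) (Fin k) ℝ) + M with hPdef
  have hP : P.PosDef := aux_posDef_shift hM hσ
  have hdet : IsUnit P.det := hP.det_pos.ne'.isUnit
  set y := P⁻¹ *ᵥ z with hy
  have hz : z = σ • y + M *ᵥ y := by
    have : P *ᵥ y = z := by
      rw [hy, Matrix.mulVec_mulVec, Matrix.mul_nonsing_inv _ hdet, Matrix.one_mulVec]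
    rw [← this, hPdef, Matrix.add_mulVec, Matrix.smul_mulVec, Matrix.one_mulVec]
  have hquad : z ⬝ᵥ P⁻¹ *ᵥ z = z ⬝ᵥ y := rfl
  have hMy : 0 ≤ y ⬝ᵥ M *ᵥ y := by simpa using hM.dotProduct_mulVec_nonneg y
  have hyy : 0 ≤ y ⬝ᵥ y := Finset.sum_nonneg fun i _ => mul_self_nonneg _
  have hMyMy : 0 ≤ (M *ᵥ y) ⬝ᵥ (M *ᵥ y) := Finset.sum_nonneg fun i _ => mul_self_nonneg _
  rw [hquad]
  rw [hz]
  simp only [add_dotProduct, smul_dotProduct, dotProduct_add,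
    dotProduct_smul, smul_eq_mul]
  have hcomm : (M *ᵥ y) ⬝ᵥ y = y ⬝ᵥ M *ᵥ y := dotProduct_comm _ _
  rw [hcomm]
  have hinv : σ * σ⁻¹ = 1 := mul_inv_cancel₀ hσ.ne'
  have h1 : 0 ≤ σ⁻¹ * ((M *ᵥ y) ⬝ᵥ (M *ᵥ y)) := mul_nonneg (inv_nonneg.mpr hσ.le) hMyMy
  set a := y ⬝ᵥ y
  set b := y ⬝ᵥ M *ᵥ y
  set c := (M *ᵥ y) ⬝ᵥ (M *ᵥ y)
  have expand : σ⁻¹ * (σ * (σ * a + b) + (σ * b + c)) = σ * a + 2 * b + σ⁻¹ * c := by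
    field_simp
    ring
  rw [expand]
  linarith [hMy, h1]

lemma aux_bilin_sq_le {M : Matrix (Fin k) (Fin k) ℝ} (hM : M.PosSemidef) {σ : ℝ} (hσ : 0 < σ)
    (x y : Fin k → ℝ) :
    (x ⬝ᵥ (σ • (1 : Matrix (Fin k) (Fin k) ℝ) + M)⁻¹ *ᵥ y) ^ 2
      ≤ (σ⁻¹ * (x ⬝ᵥ x)) * (σ⁻¹ * (y ⬝ᵥ y)) := by
  set P := σ • (1 : Matrix (Fin k) (Fin k) ℝ) + M with hPdef
  have hP : P.PosDef := aux_posDef_shift hM hσ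
  have hPinv : (P⁻¹).PosSemidef := hP.posSemidef.inv
  set Q := hPinv.sqrt with hQdef
  have hQ : Q * Q = P⁻¹ := hPinv.sqrt_mul_self
  have hQsym : Qᵀ = Q :=
    (Matrix.conjTranspose_eq_transpose_of_trivial Q).symm.trans hPinv.posSemidef_sqrt.isHermitian
  have key : ∀ a b : Fin k → ℝ, a ⬝ᵥ P⁻¹ *ᵥ b = (Q *ᵥ a) ⬝ᵥ (Q *ᵥ b) := by
    intro a b
    rw [← hQ, ← Matrix.mulVec_mulVec, Matrix.dotProduct_mulVec, ← Matrix.mulVec_transpose, hQsym]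
  rw [key]
  have hcs := Finset.sum_mul_sq_le_sq_mul_sq Finset.univ (Q *ᵥ x) (Q *ᵥ y)
  have h1 : (Q *ᵥ x) ⬝ᵥ (Q *ᵥ x) ≤ σ⁻¹ * (x ⬝ᵥ x) := by rw [← key]; exact aux_quad_le hM hσ x
  have h2 : (Q *ᵥ y) ⬝ᵥ (Q *ᵥ y) ≤ σ⁻¹ * (y ⬝ᵥ y) := by rw [← key]; exact aux_quad_le hM hσ y
  have hnn1 : 0 ≤ (Q *ᵥ x) ⬝ᵥ (Q *ᵥ x) := Finset.sum_nonneg fun i _ => mul_self_nonneg _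
  have hnn2 : 0 ≤ (Q *ᵥ y) ⬝ᵥ (Q *ᵥ y) := Finset.sum_nonneg fun i _ => mul_self_nonneg _
  calc ((Q *ᵥ x) ⬝ᵥ (Q *ᵥ y)) ^ 2 ≤ ((Q *ᵥ x) ⬝ᵥ (Q *ᵥ x)) * ((Q *ᵥ y) ⬝ᵥ (Q *ᵥ y)) := by
        simpa [dotProduct, pow_two] using hcs
    _ ≤ (σ⁻¹ * (x ⬝ᵥ x)) * (σ⁻¹ * (y ⬝ᵥ y)) := mul_le_mul h1 h2 hnn2 (le_trans hnn1 h1)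

lemma aux_trace_eq (μ : Fin k → ℝ) (K : Matrix (Fin k) (Fin k) ℝ) :
    (Matrix.vecMulVec μ μ * K).trace = μ ⬝ᵥ (K *ᵥ μ) := by
  simp only [Matrix.trace, Matrix.diag, Matrix.mul_apply, Matrix.vecMulVec_apply,
    dotProduct, Matrix.mulVec, Finset.mul_sum]
  rw [Finset.sum_comm]
  exact Finset.sum_congr rfl fun j _ => Finset.sum_congr rfl fun i _ => by ring

/-- If rank(Σ_m^{1/2}·Φᵀ·Φ·Σ_m^{1/2}) = rank(Σ_m) and μ ∈ range(Σ_m), then,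
with W_m(σ²) = Σ_m·Φᵀ·(σ²·I + Φ·Σ_m·Φᵀ)⁻¹, tr((μ·μᵀ)·Φᵀ·W_m(σ²)ᵀ) → ‖μ‖² = μ ⬝ μ as
σ² → 0⁺. -/
theorem stmt_16 {n l : ℕ} (Sm : Matrix (Fin n) (Fin n) ℝ) (hSm : Sm.PosSemidef)
    (Φ : Matrix (Fin l) (Fin n) ℝ)
    (hrank : (hSm.sqrt * Φᵀ * Φ * hSm.sqrt).rank = Sm.rank)
    (μ : Fin n → ℝ) (hμ : μ ∈ LinearMap.range Sm.mulVecLin)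
    (W : ℝ → Matrix (Fin n) (Fin l) ℝ)
    (hW : ∀ σ2 : ℝ, W σ2 = Sm * Φᵀ * (σ2 • (1 : Matrix (Fin l) (Fin l) ℝ) + Φ * Sm * Φᵀ)⁻¹) :
    Tendsto (fun σ2 : ℝ => (Matrix.vecMulVec μ μ * Φᵀ * (W σ2)ᵀ).trace)
      (nhdsWithin 0 (Set.Ioi 0)) (nhds (μ ⬝ᵥ μ)) := by
  set R := hSm.sqrt with hRdef
  have hRherm : Rᴴ = R := hSm.posSemidef_sqrt.isHermitian
  have hRsym : Rᵀ = R :=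
    (Matrix.conjTranspose_eq_transpose_of_trivial R).symm.trans hRherm
  have hRR : R * R = Sm := hSm.sqrt_mul_self
  have hSymSm : Smᵀ = Sm :=
    (Matrix.conjTranspose_eq_transpose_of_trivial Sm).symm.trans hSm.isHermitian
  set M := R * Φᵀ * Φ * R with hMdef
  have hMpsd : M.PosSemidef := by
    have := Matrix.posSemidef_conjTranspose_mul_self (Φ * R)
    rw [Matrix.conjTranspose_eq_transpose_of_trivial, Matrix.transpose_mul, hRsym] at this
    simpa [hMdef, Matrix.mul_assoc] using this
  -- range equality
  have hrankSmR : Sm.rank = R.rank := by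
    calc Sm.rank = (Rᴴ * R).rank := by rw [hRherm, hRR]
      _ = R.rank := Matrix.rank_conjTranspose_mul_self R
  have hle : LinearMap.range M.mulVecLin ≤ LinearMap.range R.mulVecLin := by
    rw [show M = R * (Φᵀ * Φ * R) by simp [hMdef, Matrix.mul_assoc], Matrix.mulVecLin_mul]
    exact LinearMap.range_comp_le_range _ _
  have hrangeEq : LinearMap.range M.mulVecLin = LinearMap.range R.mulVecLin := by
    apply Submodule.eq_of_le_of_finrank_eq hle
    exact hrank.trans hrankSmR
  obtain ⟨v, hv⟩ := hμ
  set w : Fin n → ℝ := R *ᵥ v with hwdef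
  have hμw : μ = R *ᵥ w := by
    rw [hwdef, Matrix.mulVec_mulVec, hRR, ← hv, Matrix.mulVecLin_apply]
  have hmem : Sm *ᵥ w ∈ LinearMap.range M.mulVecLin := by
    rw [hrangeEq]
    exact ⟨R *ᵥ w, by rw [Matrix.mulVecLin_apply, Matrix.mulVec_mulVec, hRR]⟩
  obtain ⟨u, hu⟩ := hmem
  rw [Matrix.mulVecLin_apply] at hu
  -- the eventual identity
  have heq : ∀ σ ∈ Set.Ioi (0:ℝ),
      (Matrix.vecMulVec μ μ * Φᵀ * (W σ)ᵀ).trace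
        = μ ⬝ᵥ μ - σ * (w ⬝ᵥ u)
            + σ ^ 2 * (w ⬝ᵥ (σ • (1 : Matrix (Fin n) (Fin n) ℝ) + M)⁻¹ *ᵥ u) := by
    intro σ hσ
    rw [Set.mem_Ioi] at hσ
    set N := σ • (1 : Matrix (Fin l) (Fin l) ℝ) + Φ * Sm * Φᵀ with hNdef
    set P := σ • (1 : Matrix (Fin n) (Fin n) ℝ) + M with hPdef
    have hΦSmΦ : (Φ * Sm * Φᵀ).PosSemidef := by
      have := hSm.mul_mul_conjTranspose_same Φ
      rwa [Matrix.conjTranspose_eq_transpose_of_trivial] at this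
    have hN : N.PosDef := aux_posDef_shift hΦSmΦ hσ
    have hP : P.PosDef := aux_posDef_shift hMpsd hσ
    have hNdet : IsUnit N.det := hN.det_pos.ne'.isUnit
    have hPdet : IsUnit P.det := hP.det_pos.ne'.isUnit
    have hNsym : Nᵀ = N := by
      rw [hNdef, Matrix.transpose_add, Matrix.transpose_smul, Matrix.transpose_one,
        Matrix.transpose_mul, Matrix.transpose_mul, Matrix.transpose_transpose, hSymSm,
        Matrix.mul_assoc]
    have hWT : (W σ)ᵀ = N⁻¹ * (Φ * Sm) := by
      rw [hW σ, ← hNdef, Matrix.transpose_mul, Matrix.transpose_mul,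
        Matrix.transpose_nonsing_inv, hNsym, Matrix.transpose_transpose, hSymSm]
    -- trace to dot product
    rw [Matrix.mul_assoc, aux_trace_eq, hWT]
    -- push-through identity
    have h1 : R * Φᵀ * N = P * (R * Φᵀ) := by
      rw [hNdef, hPdef, hMdef, ← hRR]
      simp only [Matrix.mul_add, Matrix.add_mul, Matrix.mul_smul, Matrix.smul_mul,
        Matrix.mul_one, Matrix.one_mul, Matrix.mul_assoc]
    have h2 : R * Φᵀ * N⁻¹ = P⁻¹ * (R * Φᵀ) := by
      have h := congrArg (fun X => P⁻¹ * X * N⁻¹) h1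
      simp only [Matrix.mul_assoc] at h
      rw [Matrix.mul_nonsing_inv _ hNdet] at h
      simp only [← Matrix.mul_assoc] at h
      rw [Matrix.nonsing_inv_mul _ hPdet] at h
      simpa [Matrix.mul_assoc] using h.symm
    have h3 : R * (Φᵀ * (N⁻¹ * (Φ * Sm))) * R = P⁻¹ * (M * Sm) := by
      calc R * (Φᵀ * (N⁻¹ * (Φ * Sm))) * R
          = (R * Φᵀ * N⁻¹) * (Φ * (Sm * R)) := by simp [Matrix.mul_assoc]
        _ = P⁻¹ * (R * Φᵀ) * (Φ * (Sm * R)) := by rw [h2]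
        _ = P⁻¹ * (M * Sm) := by rw [hMdef, ← hRR]; simp [Matrix.mul_assoc]
    -- dot product through R
    have hdot : ∀ (A : Matrix (Fin n) (Fin n) ℝ),
        (R *ᵥ w) ⬝ᵥ A *ᵥ (R *ᵥ w) = w ⬝ᵥ (R * A * R) *ᵥ w := by
      intro A
      rw [show R * A * R = R * (A * R) by rw [Matrix.mul_assoc],
        ← Matrix.mulVec_mulVec, ← Matrix.mulVec_mulVec, Matrix.dotProduct_mulVec w R,
        ← Matrix.mulVec_transpose, hRsym]
    rw [hμw, hdot, h3]
    -- now the scalar algebra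
    have hPinvM : ∀ x, P⁻¹ *ᵥ (M *ᵥ x) = x - σ • (P⁻¹ *ᵥ x) := by
      intro x
      have hMP : P⁻¹ * M = 1 - σ • P⁻¹ := by
        have : M = P - σ • (1 : Matrix (Fin n) (Fin n) ℝ) := by
          rw [hPdef]; abel
        rw [this, Matrix.mul_sub, Matrix.nonsing_inv_mul _ hPdet, Matrix.mul_smul,
          Matrix.mul_one]
      calc P⁻¹ *ᵥ (M *ᵥ x) = (P⁻¹ * M) *ᵥ x := Matrix.mulVec_mulVec x P⁻¹ M
        _ = x - σ • (P⁻¹ *ᵥ x) := by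
            rw [hMP, Matrix.sub_mulVec, Matrix.one_mulVec, Matrix.smul_mulVec]
    have hvm : ∀ z : Fin n → ℝ, z ᵥ* R = R *ᵥ z := by
      intro z
      conv_lhs => rw [← hRsym]
      exact Matrix.vecMul_transpose R z
    have hwMu : w ⬝ᵥ M *ᵥ u = μ ⬝ᵥ μ := by
      rw [hu, ← hRR, ← Matrix.mulVec_mulVec, Matrix.dotProduct_mulVec, hvm, ← hμw]
    rw [← Matrix.mul_assoc P⁻¹ M Sm, ← Matrix.mulVec_mulVec w (P⁻¹ * M) Sm, ← hu,
      ← Matrix.mulVec_mulVec (M *ᵥ u) P⁻¹ M, hPinvM (M *ᵥ u), hPinvM u]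
    simp only [dotProduct_sub, dotProduct_smul, smul_eq_mul, hwMu]
    rw [hμw]
    ring
  set c := Real.sqrt ((w ⬝ᵥ w) * (u ⬝ᵥ u)) with hc
  have hbound : ∀ σ ∈ Set.Ioi (0:ℝ),
      |σ ^ 2 * (w ⬝ᵥ (σ • (1 : Matrix (Fin n) (Fin n) ℝ) + M)⁻¹ *ᵥ u)| ≤ σ * c := by
    intro σ hσ
    rw [Set.mem_Ioi] at hσ
    have hsq := aux_bilin_sq_le hMpsd hσ w u
    have hre : (σ⁻¹ * (w ⬝ᵥ w)) * (σ⁻¹ * (u ⬝ᵥ u)) = (σ⁻¹) ^ 2 * ((w ⬝ᵥ w) * (u ⬝ᵥ u)) := by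
      ring
    have h2 : |w ⬝ᵥ (σ • (1 : Matrix (Fin n) (Fin n) ℝ) + M)⁻¹ *ᵥ u| ≤ σ⁻¹ * c := by
      have hs := Real.sqrt_le_sqrt hsq
      rw [Real.sqrt_sq_eq_abs, hre, Real.sqrt_mul (sq_nonneg _), Real.sqrt_sq
        (inv_nonneg.mpr hσ.le)] at hs
      exact hs
    calc |σ ^ 2 * (w ⬝ᵥ (σ • (1 : Matrix (Fin n) (Fin n) ℝ) + M)⁻¹ *ᵥ u)|
        = σ ^ 2 * |w ⬝ᵥ (σ • (1 : Matrix (Fin n) (Fin n) ℝ) + M)⁻¹ *ᵥ u| := by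
          rw [abs_mul, abs_of_nonneg (sq_nonneg σ)]
      _ ≤ σ ^ 2 * (σ⁻¹ * c) := by
          exact mul_le_mul_of_nonneg_left h2 (sq_nonneg σ)
      _ = σ * c := by field_simp [hσ.ne']
  have htend1 : Tendsto (fun σ : ℝ => μ ⬝ᵥ μ - σ * (w ⬝ᵥ u))
      (nhdsWithin 0 (Set.Ioi 0)) (nhds (μ ⬝ᵥ μ)) := by
    have h : Tendsto (fun σ : ℝ => μ ⬝ᵥ μ - σ * (w ⬝ᵥ u)) (nhds 0)
        (nhds (μ ⬝ᵥ μ - 0 * (w ⬝ᵥ u))) :=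
      tendsto_const_nhds.sub ((continuous_id.mul continuous_const).tendsto 0)
    simpa using h.mono_left nhdsWithin_le_nhds
  have htend2 : Tendsto
      (fun σ : ℝ => σ ^ 2 * (w ⬝ᵥ (σ • (1 : Matrix (Fin n) (Fin n) ℝ) + M)⁻¹ *ᵥ u))
      (nhdsWithin 0 (Set.Ioi 0)) (nhds 0) := by
    have hA : ∀ᶠ σ : ℝ in nhdsWithin 0 (Set.Ioi 0),
        ‖σ ^ 2 * (w ⬝ᵥ (σ • (1 : Matrix (Fin n) (Fin n) ℝ) + M)⁻¹ *ᵥ u)‖ ≤ σ * c := by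
      filter_upwards [self_mem_nhdsWithin] with σ hσ
      rw [Real.norm_eq_abs]
      exact hbound σ hσ
    have hB : Tendsto (fun σ : ℝ => σ * c) (nhdsWithin 0 (Set.Ioi 0)) (nhds 0) := by
      have h : Tendsto (fun σ : ℝ => σ * c) (nhds 0) (nhds (0 * c)) :=
        (continuous_id.mul continuous_const).tendsto 0
      simpa using h.mono_left nhdsWithin_le_nhds
    exact squeeze_zero_norm' hA hB
  have hfinal := htend1.add htend2
  rw [add_zero] at hfinal
  apply Tendsto.congr' _ hfinal
  filter_upwards [self_mem_nhdsWithin] with σ hσ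
  exact (heq σ hσ).symm
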